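/- Let n, m, z, ψ, T be positive integers and let A ∈ ℝ^{n×z}, B ∈ ℝ^{n×m}, D ∈ ℝ^{n×ψ}, I₀ ∈ ℝ^{m×T}, W ∈ ℝ^{ψ×T}, Δ ∈ ℝ^{z×T}, S⁺ ∈ ℝ^{n×T} satisfy the data-consistency relation S⁺ = A·Δ + B·I₀ + D·W. If G ∈ ℝ^{T×z} satisfies Δ·G = I_z, then A + B·I₀·G = (S⁺ − D·W)·G as matrices in ℝ^{n×z}; consequently, for every vector ζ ∈ ℝ^z one has A·ζ + B·(I₀·G·ζ) = (S⁺ − D·W)·G·ζ. (This is the closed-loop data-based representation of Lemma 1: with controller gain K = I₀·G, the closed-loop map A·Z(x) + B·K·Z(x) equals (S⁺ − D·W)·G·Z(x).) -/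
import Mathlib

open Matrix

/-- Closed-loop data-based representation (Lemma 1, first part):
if `S⁺ = A·Δ + B·I₀ + D·W` and `Δ·G = 1`, then `A + B·I₀·G = (S⁺ − D·W)·G`,
and hence `A·ζ + B·(I₀·G·ζ) = (S⁺ − D·W)·G·ζ` for every vector `ζ`. -/
theorem closed_loop_data_based_representation
    (n m z ψ T : ℕ) (hn : 0 < n) (hm : 0 < m) (hz : 0 < z) (hψ : 0 < ψ) (hT : 0 < T)
    (A : Matrix (Fin n) (Fin z) ℝ) (B : Matrix (Fin n) (Fin m) ℝ)
    (D : Matrix (Fin n) (Fin ψ) ℝ) (I₀ : Matrix (Fin m) (Fin T) ℝ)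
    (W : Matrix (Fin ψ) (Fin T) ℝ) (Δ : Matrix (Fin z) (Fin T) ℝ)
    (Sp : Matrix (Fin n) (Fin T) ℝ)
    (hdata : Sp = A * Δ + B * I₀ + D * W)
    (G : Matrix (Fin T) (Fin z) ℝ) (hG : Δ * G = 1) :
    A + B * I₀ * G = (Sp - D * W) * G ∧
      ∀ ζ : Fin z → ℝ,
        A.mulVec ζ + B.mulVec ((I₀ * G).mulVec ζ) =
          ((Sp - D * W) * G).mulVec ζ := by
  have key : A + B * I₀ * G = (Sp - D * W) * G := by
    subst hdata
    have : (A * Δ + B * I₀ + D * W - D * W) * G = A * (Δ * G) + B * I₀ * G := by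
      rw [add_sub_cancel_right, Matrix.add_mul, Matrix.mul_assoc]
    rw [this, hG, Matrix.mul_one]
  refine ⟨key, fun ζ => ?_⟩
  rw [← key, Matrix.add_mulVec, Matrix.mulVec_mulVec, Matrix.mul_assoc]
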